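/- Let p₀, p₁, p₂ : Fin 3 → ℝ be three non-collinear points, let ℓ > 0, φ ∈ (0, π), and let c, s be real numbers with c^2 + s^2 = 1. Then there exists a unique point q : Fin 3 → ℝ such that dist p₂ q = ℓ, the undirected angle ∠ p₁ p₂ q equals φ, and the normalized torsion data of (p₀, p₁, p₂, q) equals (c, s). (This unique-extension property underlies the fact that the torsion angles of a chain determine it, and is the basis of sampling the configuration space by dihedral angles.) -/

import Mathlib

open Real EuclideanGeometry Matrix
open RealInnerProductSpace

/-- The identification of `Fin 3 → ℝ` with `EuclideanSpace ℝ (Fin 3)`. -/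
noncomputable def toE : (Fin 3 → ℝ) → EuclideanSpace ℝ (Fin 3) := ⇑(WithLp.equiv 2 (Fin 3 → ℝ)).symm

/-- The Euclidean norm of a vector in `Fin 3 → ℝ`. -/
noncomputable def eNorm (v : Fin 3 → ℝ) : ℝ := ‖toE v‖

/-- The normalized torsion data of a quadruple `(a, b, c, d)` of points in `ℝ³`:
the pair `(⟪n₁, n₂⟫, ⟪n₁ ×₃ n₂, e₂ / ‖e₂‖⟫)` where `e₁ = b - a`, `e₂ = c - b`, `e₃ = d - c`,
`m₁ = e₁ ×₃ e₂`, `m₂ = e₂ ×₃ e₃`, `n₁ = m₁ / ‖m₁‖`, `n₂ = m₂ / ‖m₂‖`. -/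
noncomputable def normalizedTorsionData (a b c d : Fin 3 → ℝ) : ℝ × ℝ :=
  let e₁ := b - a
  let e₂ := c - b
  let e₃ := d - c
  let m₁ := e₁ ⨯₃ e₂
  let m₂ := e₂ ⨯₃ e₃
  let n₁ := (eNorm m₁)⁻¹ • m₁
  let n₂ := (eNorm m₂)⁻¹ • m₂
  (n₁ ⬝ᵥ n₂, (n₁ ⨯₃ n₂) ⬝ᵥ ((eNorm e₂)⁻¹ • e₂))

lemma toE_sub (a b : Fin 3 → ℝ) : toE (a - b) = toE a - toE b := rfl

lemma inner_toE (a b : Fin 3 → ℝ) : ⟪toE a, toE b⟫ = a ⬝ᵥ b := by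
  simp [toE, PiLp.inner_apply, RCLike.inner_apply, dotProduct]
  exact Finset.sum_congr rfl fun i _ => mul_comm _ _

lemma eNorm_sq (v : Fin 3 → ℝ) : eNorm v ^ 2 = v ⬝ᵥ v := by
  rw [eNorm, ← real_inner_self_eq_norm_sq, inner_toE]

lemma eNorm_nonneg (v : Fin 3 → ℝ) : 0 ≤ eNorm v := norm_nonneg _

lemma eNorm_pos {v : Fin 3 → ℝ} (h : v ≠ 0) : 0 < eNorm v := by
  rw [eNorm]
  exact norm_pos_iff.mpr (by simpa [toE] using h)

lemma vec_triple (u v w : Fin 3 → ℝ) : u ⨯₃ (v ⨯₃ w) = (u ⬝ᵥ w) • v - (u ⬝ᵥ v) • w := by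
  funext i
  fin_cases i <;>
    simp [cross_apply, dotProduct, Fin.sum_univ_three] <;> ring

lemma dep_of_cross_eq_zero {u v : Fin 3 → ℝ} (hu : u ≠ 0) (h : u ⨯₃ v = 0) :
    ∃ t : ℝ, v = t • u := by
  refine ⟨(u ⬝ᵥ v) / (u ⬝ᵥ u), ?_⟩
  have hu2 : u ⬝ᵥ u ≠ 0 := fun h0 => hu (dotProduct_self_eq_zero.mp h0)
  have hl : (u ⬝ᵥ u) * (v ⬝ᵥ v) - (u ⬝ᵥ v) ^ 2 = 0 := by
    have := cross_dot_cross u v u v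
    rw [h] at this
    simp only [zero_dotProduct] at this
    rw [dotProduct_comm v u] at this
    linarith [this, sq (u ⬝ᵥ v)]
  have key : (v - ((u ⬝ᵥ v) / (u ⬝ᵥ u)) • u) ⬝ᵥ (v - ((u ⬝ᵥ v) / (u ⬝ᵥ u)) • u) = 0 := by
    simp only [sub_dotProduct, dotProduct_sub, smul_dotProduct,
      dotProduct_smul, dotProduct_comm v u, smul_eq_mul]
    set a := u ⬝ᵥ u with ha
    set b := u ⬝ᵥ v with hb
    set d := v ⬝ᵥ v with hd
    field_simp
    linear_combination hl
  exact sub_eq_zero.mp (dotProduct_self_eq_zero.mp key)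

lemma eNorm_eq_of_sq {v : Fin 3 → ℝ} {x : ℝ} (hx : 0 ≤ x) (h : v ⬝ᵥ v = x ^ 2) :
    eNorm v = x := by
  have h1 : eNorm v ^ 2 = x ^ 2 := by rw [eNorm_sq]; exact h
  calc eNorm v = Real.sqrt (eNorm v ^ 2) := (Real.sqrt_sq (eNorm_nonneg v)).symm
    _ = Real.sqrt (x ^ 2) := by rw [h1]
    _ = x := Real.sqrt_sq hx

lemma eNorm_neg (v : Fin 3 → ℝ) : eNorm (-v) = eNorm v := by
  have : toE (-v) = -(toE v) := rfl
  rw [eNorm, this, norm_neg]; rfl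

lemma angle_toE (a b d : Fin 3 → ℝ) :
    ∠ (toE a) (toE b) (toE d) =
      Real.arccos ((a - b) ⬝ᵥ (d - b) / (eNorm (a - b) * eNorm (d - b))) := by
  rw [EuclideanGeometry.angle, InnerProductGeometry.angle, vsub_eq_sub, vsub_eq_sub,
    ← toE_sub, ← toE_sub, inner_toE]
  rfl

lemma cross_ne_zero_of_not_collinear {p₀ p₁ p₂ : Fin 3 → ℝ}
    (hp : ¬ Collinear ℝ ({p₀, p₁, p₂} : Set (Fin 3 → ℝ))) :
    (p₁ - p₀) ⨯₃ (p₂ - p₁) ≠ 0 := by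
  intro h
  apply hp
  by_cases h1 : p₁ - p₀ = 0
  · have hp01 : p₁ = p₀ := by
      have := sub_eq_zero.mp h1; exact this
    rw [hp01]
    have : ({p₀, p₀, p₂} : Set (Fin 3 → ℝ)) = {p₀, p₂} := by
      simp [Set.insert_comm]
    rw [this]
    exact collinear_pair ℝ p₀ p₂
  · obtain ⟨t, ht⟩ := dep_of_cross_eq_zero h1 h
    rw [collinear_iff_of_mem (Set.mem_insert p₀ _)]
    refine ⟨p₁ - p₀, ?_⟩
    intro q hq
    simp only [vadd_eq_add]
    rcases hq with h' | h' | h'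
    · exact ⟨0, by rw [h']; simp⟩
    · exact ⟨1, by rw [h']; simp⟩
    · refine ⟨1 + t, ?_⟩
      rw [h']
      have h2 : p₂ = (p₂ - p₁) + (p₁ - p₀) + p₀ := by abel
      rw [h2, ht]
      module

lemma normalizedTorsionData_eq (a b c d : Fin 3 → ℝ) :
    normalizedTorsionData a b c d =
      (((eNorm ((b - a) ⨯₃ (c - b)))⁻¹ • ((b - a) ⨯₃ (c - b))) ⬝ᵥ ((eNorm ((c - b) ⨯₃ (d - c)))⁻¹ • ((c - b) ⨯₃ (d - c))), (((eNorm ((b - a) ⨯₃ (c - b)))⁻¹ • ((b - a) ⨯₃ (c - b))) ⨯₃ ((eNorm ((c - b) ⨯₃ (d - c)))⁻¹ • ((c - b) ⨯₃ (d - c)))) ⬝ᵥ ((eNorm (c - b))⁻¹ • (c - b))) := rfl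

lemma cos_angle_toE (a b d : Fin 3 → ℝ) :
    Real.cos (∠ (toE a) (toE b) (toE d)) =
      (a - b) ⬝ᵥ (d - b) / (eNorm (a - b) * eNorm (d - b)) := by
  rw [EuclideanGeometry.angle, InnerProductGeometry.cos_angle, vsub_eq_sub, vsub_eq_sub,
    ← toE_sub, ← toE_sub, inner_toE]
  rfl

lemma dist_toE (a b : Fin 3 → ℝ) : dist (toE a) (toE b) = eNorm (a - b) := by
  rw [dist_eq_norm, ← toE_sub, eNorm]

theorem existsUnique_extension_with_prescribed_torsion
    (p₀ p₁ p₂ : Fin 3 → ℝ) (hp : ¬ Collinear ℝ ({p₀, p₁, p₂} : Set (Fin 3 → ℝ)))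
    (ℓ : ℝ) (hℓ : 0 < ℓ) (φ : ℝ) (hφ : φ ∈ Set.Ioo 0 π)
    (c s : ℝ) (hcs : c ^ 2 + s ^ 2 = 1) :
    ∃! q : Fin 3 → ℝ,
      dist (toE p₂) (toE q) = ℓ ∧
      ∠ (toE p₁) (toE p₂) (toE q) = φ ∧
      normalizedTorsionData p₀ p₁ p₂ q = (c, s) := by
  obtain ⟨hφ0, hφπ⟩ := hφ
  set cφ := Real.cos φ with hcφdef
  set sφ := Real.sin φ with hsφdef
  have hsφ : 0 < sφ := Real.sin_pos_of_pos_of_lt_pi hφ0 hφπ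
  have hpyth : cφ ^ 2 + sφ ^ 2 = 1 := by
    rw [hcφdef, hsφdef, add_comm]; exact Real.sin_sq_add_cos_sq φ
  set E₁ := p₁ - p₀ with hE₁def
  set E₂ := p₂ - p₁ with hE₂def
  set M := E₁ ⨯₃ E₂ with hMdef
  have hMne : M ≠ 0 := cross_ne_zero_of_not_collinear hp
  have hE₂ne : E₂ ≠ 0 := by
    intro h
    apply hMne
    rw [hMdef, h]
    exact map_zero (crossProduct E₁)
  set r := eNorm E₂ with hrdef
  set m := eNorm M with hmdef
  have hr : 0 < r := eNorm_pos hE₂ne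
  have hm : 0 < m := eNorm_pos hMne
  have hE₂E₂ : E₂ ⬝ᵥ E₂ = r ^ 2 := (eNorm_sq E₂).symm
  have hMM : M ⬝ᵥ M = m ^ 2 := (eNorm_sq M).symm
  have hE₂M : E₂ ⬝ᵥ M = 0 := by rw [hMdef]; exact dot_cross_self E₁ E₂
  have hME₂ : M ⬝ᵥ E₂ = 0 := by rw [dotProduct_comm]; exact hE₂M
  set W := M ⨯₃ E₂ with hWdef
  have hE₂W : E₂ ⬝ᵥ W = 0 := by rw [hWdef]; exact dot_cross_self M E₂
  have hMW : M ⬝ᵥ W = 0 := by rw [hWdef]; exact dot_self_cross M E₂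
  have hWE₂ : W ⬝ᵥ E₂ = 0 := by rw [dotProduct_comm]; exact hE₂W
  have hWM : W ⬝ᵥ M = 0 := by rw [dotProduct_comm]; exact hMW
  have hWW : W ⬝ᵥ W = m ^ 2 * r ^ 2 := by
    rw [hWdef, cross_dot_cross, hMM, hE₂E₂, hME₂, hE₂M]; ring
  have hWne : W ≠ 0 := by
    intro h
    have h2 : m ^ 2 * r ^ 2 = 0 := by rw [← hWW, h, zero_dotProduct]
    have h3 : 0 < m ^ 2 * r ^ 2 := by positivity
    linarith
  -- the orthonormal frame
  set eu : Fin 3 → ℝ := r⁻¹ • E₂ with heudef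
  set en : Fin 3 → ℝ := m⁻¹ • M with hendef
  set ew : Fin 3 → ℝ := (m * r)⁻¹ • W with hewdef
  have hE₂eq : E₂ = r • eu := by rw [heudef, smul_smul, mul_inv_cancel₀ hr.ne', one_smul]
  have hMeq : M = m • en := by rw [hendef, smul_smul, mul_inv_cancel₀ hm.ne', one_smul]
  have hWeq : W = (m * r) • ew := by
    rw [hewdef, smul_smul, mul_inv_cancel₀ (by positivity), one_smul]
  have heueu : eu ⬝ᵥ eu = 1 := by
    rw [heudef, smul_dotProduct, dotProduct_smul, hE₂E₂, smul_eq_mul, smul_eq_mul]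
    field_simp
  have henen : en ⬝ᵥ en = 1 := by
    rw [hendef, smul_dotProduct, dotProduct_smul, hMM, smul_eq_mul, smul_eq_mul]
    field_simp
  have hewew : ew ⬝ᵥ ew = 1 := by
    rw [hewdef, smul_dotProduct, dotProduct_smul, hWW, smul_eq_mul, smul_eq_mul]
    field_simp
  have heuen : eu ⬝ᵥ en = 0 := by
    rw [heudef, hendef, smul_dotProduct, dotProduct_smul, hE₂M]; simp
  have heneu : en ⬝ᵥ eu = 0 := by rw [dotProduct_comm]; exact heuen
  have heuew : eu ⬝ᵥ ew = 0 := by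
    rw [heudef, hewdef, smul_dotProduct, dotProduct_smul, hE₂W]; simp
  have heweu : ew ⬝ᵥ eu = 0 := by rw [dotProduct_comm]; exact heuew
  have henew : en ⬝ᵥ ew = 0 := by
    rw [hendef, hewdef, smul_dotProduct, dotProduct_smul, hMW]; simp
  have hewen : ew ⬝ᵥ en = 0 := by rw [dotProduct_comm]; exact henew
  -- cross product table
  have hcE₂W : E₂ ⨯₃ W = (r ^ 2) • M := by
    rw [hWdef, vec_triple, hE₂M, hE₂E₂, zero_smul, sub_zero]

  have hcE₂M : E₂ ⨯₃ M = -W := by rw [hWdef, ← cross_anticomm]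
  have hcMW : M ⨯₃ W = (-(m ^ 2)) • E₂ := by
    rw [hWdef, vec_triple, hME₂, hMM, zero_smul]
    module
  have hceuew : eu ⨯₃ ew = en := by
    rw [heudef, hewdef, LinearMap.map_smul₂, _root_.map_smul, hcE₂W, hendef,
      smul_smul, smul_smul]
    congr 1
    field_simp
  have hceuen : eu ⨯₃ en = -ew := by
    rw [heudef, hendef, LinearMap.map_smul₂, _root_.map_smul, hcE₂M, hewdef]
    match_scalars
    field_simp
  have hcenew : en ⨯₃ ew = -eu := by
    rw [hendef, hewdef, LinearMap.map_smul₂, _root_.map_smul, hcMW, heudef,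
      smul_smul, smul_smul, ← neg_smul]
    congr 1
    field_simp
  have hceueu : eu ⨯₃ eu = 0 := cross_self eu
  have hcenen : en ⨯₃ en = 0 := cross_self en
  -- the candidate displacement
  set e₀ : Fin 3 → ℝ := (-(ℓ * cφ)) • eu + (ℓ * sφ * c) • ew + (ℓ * sφ * s) • en with he₀def
  have dotsimp : ∀ x : Fin 3 → ℝ,
      e₀ ⬝ᵥ x = (-(ℓ * cφ)) * (eu ⬝ᵥ x) + (ℓ * sφ * c) * (ew ⬝ᵥ x) + (ℓ * sφ * s) * (en ⬝ᵥ x) := by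
    intro x
    simp only [he₀def, add_dotProduct, smul_dotProduct, smul_eq_mul]
  have he₀eu : e₀ ⬝ᵥ eu = -(ℓ * cφ) := by
    rw [dotsimp, heueu, heweu, heneu]; ring
  have he₀ew : e₀ ⬝ᵥ ew = ℓ * sφ * c := by
    rw [dotsimp, heuew, hewew, henew]; ring
  have he₀en : e₀ ⬝ᵥ en = ℓ * sφ * s := by
    rw [dotsimp, heuen, hewen, henen]; ring
  have he₀e₀ : e₀ ⬝ᵥ e₀ = ℓ ^ 2 := by
    rw [dotProduct_comm, dotsimp, dotProduct_comm eu e₀,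
      dotProduct_comm ew e₀, dotProduct_comm en e₀, he₀eu, he₀ew, he₀en]
    linear_combination (ℓ ^ 2 * sφ ^ 2) * hcs + ℓ ^ 2 * hpyth
  have heNorme₀ : eNorm e₀ = ℓ := eNorm_eq_of_sq hℓ.le he₀e₀
  -- the cross product E₂ ⨯₃ e₀
  have hceue₀ : eu ⨯₃ e₀ = (ℓ * sφ * c) • en + (-(ℓ * sφ * s)) • ew := by
    simp only [he₀def, map_add, _root_.map_smul, hceueu, hceuew, hceuen, smul_zero, smul_neg]
    module
  have hcE₂e₀ : E₂ ⨯₃ e₀ = (r * (ℓ * sφ * c)) • en + (-(r * (ℓ * sφ * s))) • ew := by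
    rw [hE₂eq]
    simp only [LinearMap.map_smul₂, hceue₀]
    module
  -- dot products with the second binormal
  have hm₂dot : ∀ x : Fin 3 → ℝ, (E₂ ⨯₃ e₀) ⬝ᵥ x
      = (r * (ℓ * sφ * c)) * (en ⬝ᵥ x) + (-(r * (ℓ * sφ * s))) * (ew ⬝ᵥ x) := by
    intro x
    simp only [hcE₂e₀, add_dotProduct, smul_dotProduct, smul_eq_mul]
  have hm₂m₂ : (E₂ ⨯₃ e₀) ⬝ᵥ (E₂ ⨯₃ e₀) = (ℓ * r * sφ) ^ 2 := by
    rw [dotProduct_comm, hm₂dot, dotProduct_comm en, dotProduct_comm ew,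
      hm₂dot, hm₂dot, henen, hewen, hewew, henew]
    linear_combination ((ℓ * r * sφ) ^ 2) * hcs
  have hμ₀ : eNorm (E₂ ⨯₃ e₀) = ℓ * r * sφ := eNorm_eq_of_sq (by positivity) hm₂m₂
  have hE₂dote₀ : E₂ ⬝ᵥ e₀ = -(ℓ * cφ) * r := by
    rw [hE₂eq, smul_dotProduct, smul_eq_mul, dotProduct_comm, he₀eu]; ring
  have hsub1 : p₁ - p₂ = -E₂ := by rw [hE₂def]; abel
  refine ⟨p₂ + e₀, ⟨?_, ?_, ?_⟩, ?_⟩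
  · -- distance
    rw [dist_toE]
    have h1 : p₂ - (p₂ + e₀) = -e₀ := by abel
    rw [h1, eNorm_neg, heNorme₀]
  · -- angle
    rw [angle_toE, hsub1]
    have h2 : p₂ + e₀ - p₂ = e₀ := by abel
    rw [h2, eNorm_neg, heNorme₀, ← hrdef, neg_dotProduct, hE₂dote₀]
    have h3 : -(-(ℓ * cφ) * r) / (r * ℓ) = cφ := by field_simp
    rw [h3, hcφdef]
    exact Real.arccos_cos hφ0.le hφπ.le
  · -- torsion
    have h2 : p₂ + e₀ - p₂ = e₀ := by abel
    rw [normalizedTorsionData_eq, h2, ← hE₁def, ← hE₂def, ← hMdef, ← hmdef, ← hrdef,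
      ← hendef, ← heudef, hμ₀, Prod.mk.injEq]
    constructor
    · rw [dotProduct_smul, smul_eq_mul, dotProduct_comm en, hm₂dot,
        henen, hewen]
      field_simp
      ring
    · have hcenm₂ : en ⨯₃ (E₂ ⨯₃ e₀) = (r * (ℓ * sφ * s)) • eu := by
        simp only [hcE₂e₀, map_add, _root_.map_smul, hcenen, hcenew, smul_zero, smul_neg]
        module
      rw [_root_.map_smul, hcenm₂, smul_dotProduct, smul_dotProduct,
        smul_eq_mul, smul_eq_mul, heueu]
      field_simp
  · -- uniqueness
    rintro q' ⟨hd, hang, htor⟩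
    set e := q' - p₂ with hedef
    have hq'eq : q' = p₂ + e := by rw [hedef]; abel
    have h1 : eNorm e = ℓ := by
      rw [dist_toE] at hd
      have : p₂ - q' = -e := by rw [hedef]; abel
      rw [this, eNorm_neg] at hd
      exact hd
    have hee : e ⬝ᵥ e = ℓ ^ 2 := by rw [← eNorm_sq, h1]
    have hcos : cφ = (p₁ - p₂) ⬝ᵥ (q' - p₂) / (eNorm (p₁ - p₂) * eNorm (q' - p₂)) := by
      rw [hcφdef, ← hang, cos_angle_toE]
    rw [hsub1, neg_dotProduct, ← hedef, eNorm_neg, h1, ← hrdef] at hcos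
    have hrl : r * ℓ ≠ 0 := by positivity
    rw [eq_div_iff hrl] at hcos
    have hE₂e : E₂ ⬝ᵥ e = -(ℓ * cφ) * r := by linear_combination hcos
    have heeu : e ⬝ᵥ eu = -(ℓ * cφ) := by
      rw [hE₂eq, smul_dotProduct, smul_eq_mul] at hE₂e
      rw [dotProduct_comm]
      exact mul_left_cancel₀ hr.ne' (hE₂e.trans (by ring))
    -- torsion data of q'
    rw [normalizedTorsionData_eq, ← hE₁def, ← hE₂def, ← hedef, ← hMdef, ← hmdef, ← hrdef,
      ← hendef, ← heudef, Prod.mk.injEq] at htor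
    obtain ⟨htc, hts⟩ := htor
    set m₂ := E₂ ⨯₃ e with hm₂def
    have hm₂ne : m₂ ≠ 0 := by
      intro h0
      rw [h0] at htc hts
      have hz : eNorm (0 : Fin 3 → ℝ) = 0 := by
        rw [eNorm]
        have : toE (0 : Fin 3 → ℝ) = 0 := rfl
        rw [this, norm_zero]
      rw [hz, smul_zero, dotProduct_zero] at htc
      rw [hz, smul_zero, map_zero, zero_dotProduct] at hts
      rw [← htc, ← hts] at hcs
      norm_num at hcs
    have hμsq : m₂ ⬝ᵥ m₂ = (ℓ * r * sφ) ^ 2 := by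
      rw [hm₂def, cross_dot_cross, hE₂E₂, hee, hE₂e, dotProduct_comm e E₂, hE₂e]
      linear_combination (-(ℓ ^ 2 * r ^ 2)) * hpyth
    have hμ : eNorm m₂ = ℓ * r * sφ := eNorm_eq_of_sq (by positivity) hμsq
    -- extract the two torsion components
    have hMm₂ : M ⬝ᵥ m₂ = (m * r) * (e ⬝ᵥ ew) := by
      rw [hm₂def, triple_product_permutation, triple_product_permutation, ← hWdef, hWeq,
        dotProduct_smul, smul_eq_mul]
    have heew : e ⬝ᵥ ew = ℓ * sφ * c := by
      rw [hμ, dotProduct_smul, smul_eq_mul, hendef, smul_dotProduct,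
        smul_eq_mul, hMm₂] at htc
      set X := e ⬝ᵥ ew with hXdef
      field_simp at htc
      have h5 : (m * r) * X = (m * r) * (ℓ * sφ * c) := by linear_combination (m * r) * htc
      exact mul_left_cancel₀ (by positivity) h5
    have henE₂ : en ⬝ᵥ E₂ = 0 := by
      rw [hE₂eq, dotProduct_smul, heneu, smul_zero]
    have hE₂eu : E₂ ⬝ᵥ eu = r := by
      rw [hE₂eq, smul_dotProduct, heueu, smul_eq_mul, mul_one]
    have hcenm₂ : (en ⨯₃ m₂) ⬝ᵥ eu = (en ⬝ᵥ e) * r := by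
      rw [hm₂def, vec_triple, henE₂, zero_smul, sub_zero, smul_dotProduct,
        hE₂eu, smul_eq_mul]
    have heen : e ⬝ᵥ en = ℓ * sφ * s := by
      rw [hμ, _root_.map_smul, smul_dotProduct, smul_eq_mul, hcenm₂] at hts
      rw [dotProduct_comm]
      set Y := en ⬝ᵥ e with hYdef
      field_simp at hts
      have h5 : r * Y = r * (ℓ * sφ * s) := by linear_combination r * hts
      exact mul_left_cancel₀ hr.ne' h5
    -- conclude e = e₀
    have hdeu : (e - e₀) ⬝ᵥ eu = 0 := by
      rw [sub_dotProduct, heeu, he₀eu]; ring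
    have hdew : (e - e₀) ⬝ᵥ ew = 0 := by
      rw [sub_dotProduct, heew, he₀ew]; ring
    have hden : (e - e₀) ⬝ᵥ en = 0 := by
      rw [sub_dotProduct, heen, he₀en]; ring
    have hdE₂ : (e - e₀) ⬝ᵥ E₂ = 0 := by
      rw [hE₂eq, dotProduct_smul, hdeu, smul_zero]
    have hdM : (e - e₀) ⬝ᵥ M = 0 := by
      rw [hMeq, dotProduct_smul, hden, smul_zero]
    have hdW : (e - e₀) ⬝ᵥ W = 0 := by
      rw [hWeq, dotProduct_smul, hdew, smul_zero]
    have hcrossd : (e - e₀) ⨯₃ W = 0 := by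
      rw [hWdef, vec_triple, hdE₂, hdM, zero_smul, zero_smul, sub_zero]
    have h6 := cross_dot_cross (e - e₀) W (e - e₀) W
    rw [hcrossd, zero_dotProduct, hWW, hdW, dotProduct_comm W (e - e₀), hdW] at h6
    have h9 : ((e - e₀) ⬝ᵥ (e - e₀)) * (m ^ 2 * r ^ 2) = 0 := by linarith
    have h10 : (e - e₀) ⬝ᵥ (e - e₀) = 0 :=
      (mul_eq_zero.mp h9).resolve_right (by positivity)
    have h11 : e = e₀ := sub_eq_zero.mp (dotProduct_self_eq_zero.mp h10)
    rw [hq'eq, h11]
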